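/- Let V = ℂ[Q₁,…,Q_{n+1}] and fix an integer ℓ ≥ 0. Let M ⊆ V be the span of monomials Q^μ with μ ∈ ℕ^{n+1} and Σ_{i=1}^n μ_i − 2μ_{n+1} = ℓ. Then for every such monomial Q^μ ∈ M, one has Q^μ = D(Q_n^ℓ) where D = (1/ℓ!)·Q^μ P_n^ℓ, and D preserves M (it commutes with the Euler operator E = Σ_{i=1}^n Q_iP_i − 2Q_{n+1}P_{n+1}). Hence M is generated by Q_n^ℓ under the action of the algebra of E-invariant differential operators. -/

import Mathlib

open MvPolynomial in
/-- For `ℓ ≥ 0`, every monomial `Q^μ` (`μ ∈ ℕ^{n+1}`) with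
`∑_{i=1}^n μ_i − 2μ_{n+1} = ℓ` satisfies `Q^μ = D (Q_n^ℓ)` where
`D = (1/ℓ!) Q^μ P_n^ℓ` (here `Q_n` is the variable of index `n−1` in 0-based
indexing and `P_n = ∂/∂Q_n`), and `D` commutes with the Euler operator
`E = ∑_{i=1}^n Q_iP_i − 2Q_{n+1}P_{n+1}`. -/
theorem stmt13 (n : ℕ) (hn : 0 < n) (ℓ : ℕ)
    (μ : Fin (n + 1) →₀ ℕ)
    (hμ : (∑ i : Fin n, (μ i.castSucc : ℤ)) - 2 * (μ (Fin.last n) : ℤ) = ℓ) :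
    let j : Fin (n + 1) := ⟨n - 1, by omega⟩
    let D : MvPolynomial (Fin (n + 1)) ℂ → MvPolynomial (Fin (n + 1)) ℂ :=
      fun p => (ℓ.factorial : ℂ)⁻¹ • (monomial μ 1 * (⇑(pderiv j))^[ℓ] p)
    let E : MvPolynomial (Fin (n + 1)) ℂ → MvPolynomial (Fin (n + 1)) ℂ :=
      fun p => (∑ i : Fin n, X i.castSucc * pderiv i.castSucc p) -
        2 * (X (Fin.last n) * pderiv (Fin.last n) p)
    D (X j ^ ℓ) = monomial μ 1 ∧ ∀ p, D (E p) = E (D p) := by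
  intro j D E
  have hjne : j ≠ Fin.last n := by
    intro h
    have := congrArg Fin.val h
    simp only [Fin.val_last] at this
    have h2 : n - 1 = n := congrArg Fin.val h
    omega
  -- iterated partial derivative of a monomial
  have hiter : ∀ (k : ℕ) (σ : Fin (n + 1) →₀ ℕ) (c : ℂ),
      (⇑(pderiv j))^[k] (monomial σ c)
        = monomial (σ - Finsupp.single j k) (((σ j).descFactorial k : ℂ) * c) := by
    intro k
    induction k with
    | zero => intro σ c; simp
    | succ k ih =>
      intro σ c
      rw [Function.iterate_succ_apply', ih, pderiv_monomial]
      congr 1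
      · rw [tsub_tsub, ← Finsupp.single_add]
      · rw [Finsupp.tsub_apply, Finsupp.single_eq_same, Nat.descFactorial_succ]
        push_cast
        ring
  -- X i * ∂ᵢ of a monomial
  have hXP : ∀ (i : Fin (n + 1)) (σ : Fin (n + 1) →₀ ℕ) (c : ℂ),
      X i * pderiv i (monomial σ c) = monomial σ ((σ i : ℂ) * c) := by
    intro i σ c
    by_cases h : σ i = 0
    · simp [pderiv_monomial, h]
    · have hexp : Finsupp.single i 1 + (σ - Finsupp.single i 1) = σ := by
        ext a
        rcases eq_or_ne a i with rfl | hne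
        · simp only [Finsupp.add_apply, Finsupp.single_eq_same, Finsupp.tsub_apply]
          omega
        · simp [Finsupp.single_eq_of_ne' (Ne.symm hne)]
      rw [pderiv_monomial, X, monomial_mul, hexp, one_mul, mul_comm]
  -- E on monomials
  have hW : ∀ (σ : Fin (n + 1) →₀ ℕ) (c : ℂ),
      E (monomial σ c) = monomial σ
        (((∑ i : Fin n, (σ i.castSucc : ℂ)) - 2 * (σ (Fin.last n) : ℂ)) * c) := by
    intro σ c
    show (∑ i : Fin n, X i.castSucc * pderiv i.castSucc (monomial σ c)) -
        2 * (X (Fin.last n) * pderiv (Fin.last n) (monomial σ c)) = _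
    rw [Finset.sum_congr rfl (fun i _ => hXP i.castSucc σ c), hXP,
      show (2 : MvPolynomial (Fin (n + 1)) ℂ) = C 2 by rw [map_ofNat], C_mul_monomial,
      ← map_sum, ← map_sub]
    congr 1
    rw [sub_mul, Finset.sum_mul]
    ring
  -- weight of μ
  have hWμ : (∑ i : Fin n, (μ i.castSucc : ℂ)) - 2 * (μ (Fin.last n) : ℂ) = (ℓ : ℂ) := by
    have h := congrArg (fun z : ℤ => (z : ℂ)) hμ
    push_cast at h
    exact h
  -- weight invariance
  have hwt : ∀ ν : Fin (n + 1) →₀ ℕ, ℓ ≤ ν j →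
      (∑ i : Fin n, ((μ + (ν - Finsupp.single j ℓ)) i.castSucc : ℂ))
        - 2 * ((μ + (ν - Finsupp.single j ℓ)) (Fin.last n) : ℂ)
      = (∑ i : Fin n, (ν i.castSucc : ℂ)) - 2 * (ν (Fin.last n) : ℂ) := by
    intro ν hν
    have hlast : (μ + (ν - Finsupp.single j ℓ)) (Fin.last n)
        = μ (Fin.last n) + ν (Fin.last n) := by
      simp [Finsupp.add_apply, Finsupp.tsub_apply, Finsupp.single_eq_of_ne' hjne]
    have hsum : ∀ i : Fin n,
        ((μ + (ν - Finsupp.single j ℓ)) i.castSucc : ℂ)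
        = (μ i.castSucc : ℂ) + (ν i.castSucc : ℂ)
          - (if i.castSucc = j then (ℓ : ℂ) else 0) := by
      intro i
      rcases eq_or_ne i.castSucc j with h | h
      · rw [h]
        simp only [Finsupp.add_apply, Finsupp.tsub_apply, Finsupp.single_eq_same, if_pos rfl]
        rw [Nat.cast_add, Nat.cast_sub hν]
        simp
        ring
      · simp [Finsupp.add_apply, Finsupp.tsub_apply, Finsupp.single_eq_of_ne' (Ne.symm h), h]
    have hone : (∑ i : Fin n, (if i.castSucc = j then (ℓ : ℂ) else 0)) = (ℓ : ℂ) := by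
      have hiff : ∀ i : Fin n, i.castSucc = j ↔ i = ⟨n - 1, by omega⟩ := by
        intro i
        rw [Fin.ext_iff, Fin.ext_iff]
        exact Iff.rfl
      simp only [hiff]
      simp
    rw [Finset.sum_congr rfl (fun i _ => hsum i), hlast, Finset.sum_sub_distrib,
      Finset.sum_add_distrib, hone]
    push_cast
    linear_combination hWμ
  -- commutation on monomials
  have hcomm : ∀ (ν : Fin (n + 1) →₀ ℕ) (c : ℂ),
      D (E (monomial ν c)) = E (D (monomial ν c)) := by
    intro ν c
    have hD : ∀ c' : ℂ, D (monomial ν c')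
        = monomial (μ + (ν - Finsupp.single j ℓ))
            ((ℓ.factorial : ℂ)⁻¹ * (((ν j).descFactorial ℓ : ℂ) * c')) := by
      intro c'
      show (ℓ.factorial : ℂ)⁻¹ • (monomial μ 1 * (⇑(pderiv j))^[ℓ] (monomial ν c')) = _
      rw [hiter, monomial_mul, one_mul, smul_monomial, smul_eq_mul]
    rw [hW, hD, hD, hW]
    congr 1
    rcases lt_or_ge (ν j) ℓ with h | h
    · rw [Nat.descFactorial_eq_zero_iff_lt.mpr h]
      push_cast
      ring
    · rw [hwt ν h]
      ring
  -- additivity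
  have hEadd : ∀ p q, E (p + q) = E p + E q := by
    intro p q
    show (∑ i : Fin n, X i.castSucc * pderiv i.castSucc (p + q)) -
        2 * (X (Fin.last n) * pderiv (Fin.last n) (p + q)) = _
    simp only [map_add, mul_add, Finset.sum_add_distrib]
    ring
  have hit : ∀ (k : ℕ) (p q : MvPolynomial (Fin (n + 1)) ℂ),
      (⇑(pderiv j))^[k] (p + q) = (⇑(pderiv j))^[k] p + (⇑(pderiv j))^[k] q := by
    intro k
    induction k with
    | zero => intro p q; simp
    | succ k ih => intro p q; simp [Function.iterate_succ_apply, map_add, ih]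
  have hDadd : ∀ p q, D (p + q) = D p + D q := by
    intro p q
    show (ℓ.factorial : ℂ)⁻¹ • (monomial μ 1 * (⇑(pderiv j))^[ℓ] (p + q)) = _
    rw [hit, mul_add, smul_add]
  refine ⟨?_, ?_⟩
  · show (ℓ.factorial : ℂ)⁻¹ • (monomial μ 1 * (⇑(pderiv j))^[ℓ] (X j ^ ℓ)) = _
    rw [X_pow_eq_monomial, hiter]
    simp only [tsub_self, Finsupp.single_eq_same, Nat.descFactorial_self, mul_one,
      monomial_zero']
    rw [mul_comm, C_mul_monomial, smul_monomial, smul_eq_mul, mul_one, inv_mul_cancel₀]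
    exact_mod_cast Nat.factorial_ne_zero ℓ
  · intro p
    induction p using MvPolynomial.induction_on' with
    | monomial u a => exact hcomm u a
    | add p q hp hq => rw [hEadd, hDadd, hp, hq, hDadd, hEadd]
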